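/- The spherically symmetric symmetry functions f_I^î satisfy the integrability equations X_I(f_J^k̂) − X_J(f_I^k̂) − f_I^î f_J^ĵ C^k̂_{îĵ} = C^K_{IJ} f_K^k̂ on U for all I, J ∈ {1,2,3} and k̂ ∈ {1,2,3}, where the structure constants in both index types are those of so(3): C^3_{12} = −1, C^2_{13} = 1, C^1_{23} = −1 (extended antisymmetrically, all others zero), and likewise C^3̂_{1̂2̂} = −1, C^2̂_{1̂3̂} = 1, C^1̂_{2̂3̂} = −1. -/

import Mathlib

open Real

/-- Partial derivative of a scalar function on ℝ⁴ in the μ-th coordinate direction. -/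
noncomputable def pd (f : (Fin 4 → ℝ) → ℝ) (μ : Fin 4) (p : Fin 4 → ℝ) : ℝ :=
  fderiv ℝ f p (Pi.single μ 1)

/-- The spherical symmetry generators X₁, X₂, X₃ (coordinates (t,r,θ,φ)). -/
noncomputable def Xsph : Fin 3 → (Fin 4 → ℝ) → Fin 4 → ℝ :=
  ![fun p => ![0, 0, Real.sin (p 3), Real.cos (p 3) / Real.tan (p 2)],
    fun p => ![0, 0, -Real.cos (p 3), Real.sin (p 3) / Real.tan (p 2)],
    fun _ => ![0, 0, 0, 1]]

/-- The spherically symmetric symmetry functions: f₁^1̂ = cosφ/sinθ,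
    f₂^1̂ = sinφ/sinθ, all other f_I^î = 0. -/
noncomputable def fsph : Fin 3 → Fin 3 → (Fin 4 → ℝ) → ℝ :=
  fun I i p =>
    if I = 0 ∧ i = 0 then Real.cos (p 3) / Real.sin (p 2)
    else if I = 1 ∧ i = 0 then Real.sin (p 3) / Real.sin (p 2)
    else 0

/-- so(3) structure constants: C^3_{12} = −1, C^2_{13} = 1, C^1_{23} = −1,
    extended antisymmetrically; all others zero. (C K I J, first index upper.) -/
def Cso3 : Fin 3 → Fin 3 → Fin 3 → ℝ :=
  ![![![0,0,0], ![0,0,-1], ![0,1,0]],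
    ![![0,0,1], ![0,0,0], ![-1,0,0]],
    ![![0,-1,0], ![1,0,0], ![0,0,0]]]

/-- Coordinate projections are differentiable with derivative the projection map. -/
lemma hproj (i : Fin 4) (p : Fin 4 → ℝ) :
    HasFDerivAt (fun q : Fin 4 → ℝ => q i)
      (ContinuousLinearMap.proj (R := ℝ) (φ := fun _ : Fin 4 => ℝ) i) p :=
  hasFDerivAt_apply i p

/-- Derivative of q ↦ (sin θ)⁻¹. -/
lemma hinvsin (p : Fin 4 → ℝ) (hs : Real.sin (p 2) ≠ 0) :
    HasFDerivAt (fun q : Fin 4 → ℝ => (Real.sin (q 2))⁻¹)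
      ((-(Real.sin (p 2) ^ 2)⁻¹) • (Real.cos (p 2) •
        ContinuousLinearMap.proj (R := ℝ) (φ := fun _ : Fin 4 => ℝ) 2)) p :=
  (hasDerivAt_inv hs).comp_hasFDerivAt p ((hproj 2 p).sin)

/-- Partial derivatives of cos φ / sin θ. -/
lemma pd_cds (μ : Fin 4) (p : Fin 4 → ℝ) (hs : Real.sin (p 2) ≠ 0) :
    pd (fun q => Real.cos (q 3) / Real.sin (q 2)) μ p =
      (if μ = 3 then -Real.sin (p 3) / Real.sin (p 2) else 0)
      + (if μ = 2 then -(Real.cos (p 3) * Real.cos (p 2)) / Real.sin (p 2) ^ 2 else 0) := by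
  have h := (hproj 3 p).cos.mul (hinvsin p hs)
  simp only [div_eq_mul_inv, pd]
  rw [show (fun q : Fin 4 → ℝ => Real.cos (q 3) * (Real.sin (q 2))⁻¹) =
      ((fun x : Fin 4 → ℝ => Real.cos (x 3)) * fun q => (Real.sin (q 2))⁻¹) from rfl, h.fderiv]
  fin_cases μ <;>
    simp [ContinuousLinearMap.proj_apply, Pi.single_apply] <;> field_simp

/-- Partial derivatives of sin φ / sin θ. -/
lemma pd_sds (μ : Fin 4) (p : Fin 4 → ℝ) (hs : Real.sin (p 2) ≠ 0) :
    pd (fun q => Real.sin (q 3) / Real.sin (q 2)) μ p =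
      (if μ = 3 then Real.cos (p 3) / Real.sin (p 2) else 0)
      + (if μ = 2 then -(Real.sin (p 3) * Real.cos (p 2)) / Real.sin (p 2) ^ 2 else 0) := by
  have h := (hproj 3 p).sin.mul (hinvsin p hs)
  simp only [div_eq_mul_inv, pd]
  rw [show (fun q : Fin 4 → ℝ => Real.sin (q 3) * (Real.sin (q 2))⁻¹) =
      ((fun x : Fin 4 → ℝ => Real.sin (x 3)) * fun q => (Real.sin (q 2))⁻¹) from rfl, h.fderiv]
  fin_cases μ <;>
    simp [ContinuousLinearMap.proj_apply, Pi.single_apply] <;> field_simp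

lemma pd_zero (μ : Fin 4) (p : Fin 4 → ℝ) : pd (fun _ => (0:ℝ)) μ p = 0 := by
  simp [pd]

lemma div_tan_eq (a θ : ℝ) (hs : Real.sin θ ≠ 0) :
    a / Real.tan θ = a * Real.cos θ / Real.sin θ := by
  rw [Real.tan_eq_sin_div_cos]
  rcases eq_or_ne (Real.cos θ) 0 with h | h
  · simp [h]
  · field_simp

lemma fsph_def (I i : Fin 3) : fsph I i = fun p =>
    if I = 0 ∧ i = 0 then Real.cos (p 3) / Real.sin (p 2)
    else if I = 1 ∧ i = 0 then Real.sin (p 3) / Real.sin (p 2)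
    else 0 := rfl

set_option maxHeartbeats 2000000 in
/-- The spherically symmetric symmetry functions satisfy the integrability equations
    X_I(f_J^k̂) − X_J(f_I^k̂) − f_I^î f_J^ĵ Ĉ^k̂_{îĵ} = C^K_{IJ} f_K^k̂ on U. -/
theorem spherical_symmetry_functions_integrability :
    ∀ (I J : Fin 3) (k : Fin 3), ∀ p : Fin 4 → ℝ, 0 < p 2 → p 2 < Real.pi →
      (∑ μ, Xsph I p μ * pd (fsph J k) μ p) - (∑ μ, Xsph J p μ * pd (fsph I k) μ p)
        - (∑ i, ∑ j, fsph I i p * fsph J j p * Cso3 k i j)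
      = ∑ K, Cso3 K I J * fsph K k p := by
  intro I J k p h1 h2
  have hs : Real.sin (p 2) ≠ 0 := (Real.sin_pos_of_pos_of_lt_pi h1 h2).ne'
  fin_cases I <;> fin_cases J <;> fin_cases k <;>
    simp [Xsph, fsph_def, Cso3, Fin.sum_univ_four, Fin.sum_univ_three,
      div_tan_eq _ _ hs, pd_cds _ p hs, pd_sds _ p hs, pd_zero] <;>
    field_simp <;>
    nlinarith [Real.sin_sq_add_cos_sq (p 2), Real.sin_sq_add_cos_sq (p 3),
      sq_nonneg (Real.sin (p 2)), sq_nonneg (Real.cos (p 3))]
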